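/- Let q be a power of a prime p, let n ≥ 2, let r be an integer with ⌈n/2⌉ ≤ r ≤ n-1 and gcd(n,r) = 1, let s ≥ 1, and let g_s(y) = y^{q^s} + a_{s-1} y^{q^{s-1}} + ... + a_1 y^q + a_0 y ∈ F_{q^n}[y] be a separable q-polynomial (a_0 ≠ 0) that splits into linear factors over F_{q^n}. Then there exists a unique pair of nonzero q-polynomials Q(y), U(y) ∈ F_{q^n}[y] with deg(U(y)) ≤ q^{n-r-1} such that Q(y)^{q^{n-r}} = y + U(g_s(y)). (Necessarily deg(U) is a power q^u of q with u ≤ n-r-1, and deg(Q) ≤ q^{s-1}.) -/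

import Mathlib

open Polynomial

/-- A `q`-polynomial (linearized polynomial): every monomial exponent is a power of `q`. -/
def IsqPoly (q : ℕ) {F : Type*} [Semiring F] (f : Polynomial F) : Prop :=
  ∀ i ∈ f.support, ∃ k : ℕ, i = q ^ k

namespace PropAux

variable {F : Type*} [Field F]

/-- Canonical form of a `q`-polynomial given by its coefficient function. -/
noncomputable def qpolyOf (q : ℕ) (c : ℕ → F) (N : ℕ) : Polynomial F :=
  ∑ k ∈ Finset.range N, C (c k) * X ^ q ^ k

lemma coeff_qpolyOf {q : ℕ} (hq2 : 2 ≤ q) (c : ℕ → F) (N t : ℕ) :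
    (qpolyOf q c N).coeff (q ^ t) = if t < N then c t else 0 := by
  unfold qpolyOf
  rw [finset_sum_coeff]
  have h : ∀ k ∈ Finset.range N, (C (c k) * X ^ q ^ k).coeff (q ^ t)
      = if k = t then c k else 0 := by
    intro k _
    rw [coeff_C_mul, coeff_X_pow]
    by_cases h : k = t
    · simp [h]
    · have h2 : q ^ t ≠ q ^ k := fun hh => h (Nat.pow_right_injective hq2 hh.symm)
      simp [h, h2]
  rw [Finset.sum_congr rfl h, Finset.sum_ite_eq' (Finset.range N) t c]
  simp [Finset.mem_range]

lemma coeff_qpolyOf_ne {q : ℕ} (c : ℕ → F) (N j : ℕ) (h : ∀ t, t < N → j ≠ q ^ t) :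
    (qpolyOf q c N).coeff j = 0 := by
  unfold qpolyOf
  rw [finset_sum_coeff]
  refine Finset.sum_eq_zero fun k hk => ?_
  rw [coeff_C_mul, coeff_X_pow, if_neg (h k (Finset.mem_range.mp hk)), mul_zero]

lemma qpolyOf_congr {q : ℕ} {c d : ℕ → F} {N : ℕ} (h : ∀ k, k < N → c k = d k) :
    qpolyOf q c N = qpolyOf q d N :=
  Finset.sum_congr rfl fun k hk => by rw [h k (Finset.mem_range.mp hk)]

lemma qpolyOf_extend {q : ℕ} {c : ℕ → F} {N N' : ℕ} (hNN' : N ≤ N')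
    (h : ∀ k, N ≤ k → c k = 0) : qpolyOf q c N' = qpolyOf q c N := by
  refine (Finset.sum_subset (Finset.range_subset_range.mpr hNN') ?_).symm
  intro k hk hknot
  rw [h k (by simpa using hknot), map_zero, zero_mul]

lemma qpolyOf_add {q : ℕ} (c d : ℕ → F) (N : ℕ) :
    qpolyOf q c N + qpolyOf q d N = qpolyOf q (fun k => c k + d k) N := by
  unfold qpolyOf
  rw [← Finset.sum_add_distrib]
  exact Finset.sum_congr rfl fun k _ => by rw [C_add, add_mul]

lemma isqPoly_qpolyOf {q : ℕ} (c : ℕ → F) (N : ℕ) : IsqPoly q (qpolyOf q c N) := by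
  intro i hi
  by_contra hcon
  push_neg at hcon
  exact (Polynomial.mem_support_iff.mp hi) (coeff_qpolyOf_ne c N i (fun t _ h => hcon t h))

lemma natDegree_qpolyOf_le {q : ℕ} (hq1 : 1 ≤ q) (c : ℕ → F) (N : ℕ) (hN : 1 ≤ N) :
    (qpolyOf q c N).natDegree ≤ q ^ (N - 1) := by
  refine Polynomial.natDegree_sum_le_of_forall_le _ _ fun k hk => ?_
  refine (Polynomial.natDegree_C_mul_le _ _).trans ?_
  rw [natDegree_X_pow]
  exact Nat.pow_le_pow_right hq1 (by have := Finset.mem_range.mp hk; omega)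

lemma eq_qpolyOf {q : ℕ} (hq2 : 2 ≤ q) {P : Polynomial F} (hP : IsqPoly q P) (N : ℕ)
    (hN : ∀ k, N ≤ k → P.coeff (q ^ k) = 0) :
    P = qpolyOf q (fun k => P.coeff (q ^ k)) N := by
  ext j
  by_cases hj : ∃ t, j = q ^ t
  · obtain ⟨t, rfl⟩ := hj
    rw [coeff_qpolyOf hq2]
    split
    · rfl
    · exact hN t (by omega)
  · push_neg at hj
    rw [coeff_qpolyOf_ne _ _ _ (fun t _ => hj t)]
    by_contra h
    exact hj ((hP j (Polynomial.mem_support_iff.mpr h)).choose)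
      (hP j (Polynomial.mem_support_iff.mpr h)).choose_spec

lemma sum_shift {M : Type*} [AddCommMonoid M] (f : ℕ → M) (N m : ℕ) :
    ∑ t ∈ Finset.range (N + m), (if m ≤ t then f (t - m) else 0)
      = ∑ k ∈ Finset.range N, f k := by
  induction N with
  | zero =>
    simp only [Nat.zero_add, Finset.range_zero, Finset.sum_empty]
    exact Finset.sum_eq_zero fun t ht => if_neg (by have := Finset.mem_range.mp ht; omega)
  | succ N ih =>
    have h : N + 1 + m = (N + m) + 1 := by omega
    rw [h, Finset.sum_range_succ, ih, if_pos (Nat.le_add_left m N), Nat.add_sub_cancel,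
      Finset.sum_range_succ]

lemma qpolyOf_pow (p : ℕ) [Fact p.Prime] [CharP F p] {q e : ℕ} (hq : q = p ^ e)
    (c : ℕ → F) (N m : ℕ) :
    (qpolyOf q c N) ^ q ^ m
      = qpolyOf q (fun t => if m ≤ t then c (t - m) ^ q ^ m else 0) (N + m) := by
  have hqm : q ^ m = p ^ (e * m) := by rw [hq, ← pow_mul]
  haveI : ExpChar F[X] p := ExpChar.prime (Fact.out)
  calc (qpolyOf q c N) ^ q ^ m
      = ∑ k ∈ Finset.range N, (C (c k) * X ^ q ^ k) ^ q ^ m := by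
        rw [qpolyOf, hqm, sum_pow_char_pow]
    _ = ∑ k ∈ Finset.range N, C (c k ^ q ^ m) * X ^ q ^ (k + m) := by
        refine Finset.sum_congr rfl fun k _ => ?_
        rw [mul_pow, ← C_pow, ← pow_mul, ← pow_add]
    _ = qpolyOf q (fun t => if m ≤ t then c (t - m) ^ q ^ m else 0) (N + m) := by
        rw [qpolyOf]
        rw [← sum_shift (fun k => C (c k ^ q ^ m) * X ^ q ^ (k + m)) N m]
        refine Finset.sum_congr rfl fun t ht => ?_
        by_cases hmt : m ≤ t
        · rw [if_pos hmt, if_pos hmt]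
          rw [Nat.sub_add_cancel hmt]
        · rw [if_neg hmt, if_neg hmt, map_zero, zero_mul]

lemma qpolyOf_C_mul {q : ℕ} (x : F) (c : ℕ → F) (N : ℕ) :
    C x * qpolyOf q c N = qpolyOf q (fun t => x * c t) N := by
  unfold qpolyOf
  rw [Finset.mul_sum]
  exact Finset.sum_congr rfl fun k _ => by rw [← mul_assoc, ← C_mul]

lemma qpolyOf_sum {q : ℕ} {ι : Type*} (s : Finset ι) (f : ι → ℕ → F) (N : ℕ) :
    ∑ i ∈ s, qpolyOf q (f i) N = qpolyOf q (fun t => ∑ i ∈ s, f i t) N := by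
  unfold qpolyOf
  rw [Finset.sum_comm]
  exact Finset.sum_congr rfl fun t _ => by rw [← Finset.sum_mul, map_sum]

lemma qpolyOf_comp (p : ℕ) [Fact p.Prime] [CharP F p] {q e : ℕ} (hq : q = p ^ e)
    (c b : ℕ → F) (N M : ℕ) (hb : ∀ j, M ≤ j → b j = 0) :
    (qpolyOf q c N).comp (qpolyOf q b M)
      = qpolyOf q (fun t => ∑ k ∈ Finset.range N,
          if k ≤ t then c k * b (t - k) ^ q ^ k else 0) (N + M) := by
  have hq0 : q ≠ 0 := by
    rw [hq]; exact pow_ne_zero _ (Nat.Prime.ne_zero Fact.out)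
  rw [qpolyOf, Polynomial.sum_comp]
  have step : ∀ k, k < N → (C (c k) * X ^ q ^ k).comp (qpolyOf q b M)
      = qpolyOf q (fun t => if k ≤ t then c k * b (t - k) ^ q ^ k else 0) (N + M) := by
    intro k hk
    rw [mul_comp, C_comp, X_pow_comp, qpolyOf_pow p hq b M k, qpolyOf_C_mul]
    rw [show (fun t => c k * if k ≤ t then b (t - k) ^ q ^ k else 0)
        = (fun t => if k ≤ t then c k * b (t - k) ^ q ^ k else 0) from
        funext fun t => by split <;> simp]
    rw [← qpolyOf_extend (N := M + k) (N' := N + M) (by omega)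
      (fun t ht => by
        rw [if_pos (by omega), hb (t - k) (by omega), zero_pow (pow_ne_zero _ hq0), mul_zero])]
  calc ∑ k ∈ Finset.range N, (C (c k) * X ^ q ^ k).comp (qpolyOf q b M)
      = ∑ k ∈ Finset.range N,
          qpolyOf q (fun t => if k ≤ t then c k * b (t - k) ^ q ^ k else 0) (N + M) :=
        Finset.sum_congr rfl fun k hk => step k (Finset.mem_range.mp hk)
    _ = _ := qpolyOf_sum _ _ _

/-- Frobenius-type maps are injective on domains of characteristic `p`. -/
lemma frob_inj (p : ℕ) [Fact p.Prime] {R : Type*} [CommRing R] [IsDomain R] [CharP R p]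
    {q e : ℕ} (hq : q = p ^ e) (m : ℕ) :
    Function.Injective (fun x : R => x ^ q ^ m) := by
  intro x y h
  have hqm : q ^ m = p ^ (e * m) := by rw [hq, ← pow_mul]
  have h2 : (x - y) ^ p ^ (e * m) = 0 := by
    rw [sub_pow_char_pow, ← hqm]
    simpa using sub_eq_zero.mpr h
  have h3 : x - y = 0 :=
    (pow_eq_zero_iff (pow_ne_zero _ (Nat.Prime.ne_zero Fact.out))).mp h2
  exact sub_eq_zero.mp h3

/-- The "convolution" giving the coefficients of `U ∘ g`. -/
def qconv (q : ℕ) (b : ℕ → F) (m : ℕ) (u : ℕ → F) (t : ℕ) : F :=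
  ∑ k ∈ Finset.range m, if k ≤ t then u k * b (t - k) ^ q ^ k else 0

def qpad (m : ℕ) (v : Fin m → F) (k : ℕ) : F := if h : k < m then v ⟨k, h⟩ else 0

lemma qconv_lt {q : ℕ} {b : ℕ → F} {m : ℕ} (u : ℕ → F) {t : ℕ} (ht : t < m) :
    qconv q b m u t = ∑ k ∈ Finset.range (t + 1), u k * b (t - k) ^ q ^ k := by
  unfold qconv
  rw [← Finset.sum_subset (Finset.range_subset_range.mpr (by omega : t + 1 ≤ m))
    (fun k _ hk => if_neg (by simp at hk ⊢; omega))]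
  exact Finset.sum_congr rfl fun k hk => if_pos (by have := Finset.mem_range.mp hk; omega)

lemma qconv_inj {q : ℕ} {b : ℕ → F} (hb0 : b 0 ≠ 0) {m : ℕ} {u u' : ℕ → F}
    (hu : ∀ k, m ≤ k → u k = 0) (hu' : ∀ k, m ≤ k → u' k = 0)
    (h : ∀ t, t < m → qconv q b m u t = qconv q b m u' t) : u = u' := by
  have key : ∀ t, t < m → u t = u' t := by
    intro t
    induction t using Nat.strong_induction_on with
    | _ t ih =>
      intro ht
      have h1 := h t ht
      rw [qconv_lt u ht, qconv_lt u' ht, Finset.sum_range_succ, Finset.sum_range_succ] at h1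
      have h2 : ∑ k ∈ Finset.range t, u k * b (t - k) ^ q ^ k
          = ∑ k ∈ Finset.range t, u' k * b (t - k) ^ q ^ k :=
        Finset.sum_congr rfl fun k hk => by
          rw [ih k (Finset.mem_range.mp hk) (by have := Finset.mem_range.mp hk; omega)]
      rw [h2] at h1
      have h3 := add_left_cancel h1
      rw [Nat.sub_self] at h3
      exact mul_right_cancel₀ (pow_ne_zero _ hb0) h3
  funext k
  by_cases hk : k < m
  · exact key k hk
  · rw [hu k (by omega), hu' k (by omega)]

lemma qconv_surj [Fintype F] {q : ℕ} {b : ℕ → F} (hb0 : b 0 ≠ 0) (m : ℕ) (tgt : ℕ → F) :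
    ∃ u : ℕ → F, (∀ k, m ≤ k → u k = 0) ∧ ∀ t, t < m → qconv q b m u t = tgt t := by
  classical
  set Φ : (Fin m → F) → (Fin m → F) := fun v t => qconv q b m (qpad m v) t with hΦ
  have hinj : Function.Injective Φ := by
    intro v v' hvv'
    have hpad : qpad m v = qpad m v' := by
      refine qconv_inj (q := q) hb0 (fun k hk => dif_neg (Nat.not_lt.mpr hk))
        (fun k hk => dif_neg (Nat.not_lt.mpr hk)) (fun t ht => ?_)
      exact congrFun hvv' ⟨t, ht⟩
    funext t
    have := congrFun hpad t
    simpa [qpad] using this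
  have hsurj : Function.Surjective Φ := Finite.injective_iff_surjective.mp hinj
  obtain ⟨v, hv⟩ := hsurj (fun t => tgt t)
  exact ⟨qpad m v, fun k hk => dif_neg (Nat.not_lt.mpr hk), fun t ht => congrFun hv ⟨t, ht⟩⟩

end PropAux

theorem propchave_exists_unique_Q_U
    (p q e n r s : ℕ) (hp : p.Prime) (he : 0 < e) (hq : q = p ^ e)
    (hn : 2 ≤ n) (hr1 : n ≤ 2 * r) (hr2 : r ≤ n - 1) (hgcd : Nat.gcd n r = 1)
    (hs : 1 ≤ s)
    (F : Type*) [Field F] [Fintype F] (hF : Fintype.card F = q ^ n)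
    (a : ℕ → F) (ha : a 0 ≠ 0)
    (gs : Polynomial F)
    (hgs : gs = X ^ q ^ s + ∑ i ∈ Finset.range s, C (a i) * X ^ q ^ i)
    (hsplit : Splits (gs.map (RingHom.id F))) :
    (∃! QU : Polynomial F × Polynomial F,
        QU.1 ≠ 0 ∧ QU.2 ≠ 0 ∧ IsqPoly q QU.1 ∧ IsqPoly q QU.2 ∧
        QU.2.natDegree ≤ q ^ (n - r - 1) ∧
        QU.1 ^ q ^ (n - r) = X + QU.2.comp gs) ∧
    (∀ Q U : Polynomial F, Q ≠ 0 → U ≠ 0 → IsqPoly q Q → IsqPoly q U →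
        U.natDegree ≤ q ^ (n - r - 1) →
        Q ^ q ^ (n - r) = X + U.comp gs →
        (∃ u : ℕ, u ≤ n - r - 1 ∧ U.natDegree = q ^ u) ∧ Q.natDegree ≤ q ^ (s - 1)) := by
  classical
  have hq2 : 2 ≤ q := by
    rw [hq]
    calc 2 ≤ p := hp.two_le
      _ ≤ p ^ e := Nat.le_self_pow he.ne' p
  have hq0 : q ≠ 0 := by omega
  haveI hfact : Fact p.Prime := ⟨hp⟩
  haveI hchar : CharP F p := by
    obtain ⟨p', hp'⟩ := CharP.exists F
    haveI := hp'
    have hp'prime : p'.Prime := CharP.char_is_prime F p'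
    obtain ⟨n', -, hcard⟩ := FiniteField.card F p'
    have hpp : p' ^ (n' : ℕ) = p ^ (e * n) := by rw [← hcard, hF, hq, ← pow_mul]
    have hdvd : p' ∣ p ^ (e * n) := by
      rw [← hpp]
      exact dvd_pow_self p' (by exact_mod_cast n'.ne_zero)
    have hpe : p' = p :=
      (Nat.prime_dvd_prime_iff_eq hp'prime hp).mp (hp'prime.dvd_of_dvd_pow hdvd)
    exact hpe ▸ hp'
  set m : ℕ := n - r with hmdef
  have hm1 : 1 ≤ m := by omega
  set b : ℕ → F := (fun i => if i < s then a i else if i = s then 1 else 0) with hbdef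
  have hb0 : b 0 = a 0 := by simp only [hbdef]; rw [if_pos (by omega : 0 < s)]
  have hb0' : b 0 ≠ 0 := by rw [hb0]; exact ha
  have hbz : ∀ j, s + 1 ≤ j → b j = 0 := fun j hj => by
    simp only [hbdef]; rw [if_neg (by omega), if_neg (by omega)]
  have hgs' : gs = PropAux.qpolyOf q b (s + 1) := by
    rw [hgs]
    unfold PropAux.qpolyOf
    rw [Finset.sum_range_succ]
    have h1 : b s = 1 := by simp [hbdef]
    rw [h1, map_one, one_mul, add_comm (X ^ q ^ s)]
    congr 1
    refine Finset.sum_congr rfl fun i hi => ?_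
    have hi' := Finset.mem_range.mp hi
    simp only [hbdef]
    rw [if_pos hi']
  have hgsdeg : gs.natDegree = q ^ s := by
    rw [hgs]
    rw [Polynomial.natDegree_add_eq_left_of_natDegree_lt, natDegree_X_pow]
    rw [natDegree_X_pow]
    calc (∑ i ∈ Finset.range s, C (a i) * X ^ q ^ i).natDegree
        ≤ q ^ (s - 1) := PropAux.natDegree_qpolyOf_le (by omega) a s hs
      _ < q ^ s := Nat.pow_lt_pow_right (by omega) (by omega)
  -- existence: solve the triangular system
  obtain ⟨u, huz, hu⟩ := PropAux.qconv_surj (q := q) hb0' m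
    (fun t => if t = 0 then (-1 : F) else 0)
  set U : Polynomial F := PropAux.qpolyOf q u m with hUdef
  set vc : ℕ → F := fun t => (if t = 0 then (1 : F) else 0) + PropAux.qconv q b m u t
    with hvcdef
  have hcomp : U.comp gs = PropAux.qpolyOf q (PropAux.qconv q b m u) (m + (s + 1)) := by
    rw [hUdef, hgs', PropAux.qpolyOf_comp p hq u b m (s + 1) hbz]
    rfl
  have hX1 : (X : Polynomial F)
      = PropAux.qpolyOf q (fun t => if t = 0 then (1 : F) else 0) 1 := by
    unfold PropAux.qpolyOf
    simp
  have hX : (X : Polynomial F)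
      = PropAux.qpolyOf q (fun t => if t = 0 then (1 : F) else 0) (m + (s + 1)) := by
    rw [hX1]
    exact (PropAux.qpolyOf_extend (by omega) (fun k hk => if_neg (by omega))).symm
  have hrhs : X + U.comp gs = PropAux.qpolyOf q vc (m + (s + 1)) := by
    rw [hcomp, hX, PropAux.qpolyOf_add]
  have hvc0 : ∀ t, t < m → vc t = 0 := by
    intro t ht
    simp only [hvcdef]
    rw [hu t ht]
    by_cases h : t = 0 <;> simp [h]
  have hfrobinj : Function.Injective (fun x : F => x ^ q ^ m) := PropAux.frob_inj p hq m
  have hfrobsurj : Function.Surjective (fun x : F => x ^ q ^ m) :=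
    Finite.injective_iff_surjective.mp hfrobinj
  set qc : ℕ → F := fun k => Function.surjInv hfrobsurj (vc (k + m)) with hqcdef
  have hqc : ∀ k, qc k ^ q ^ m = vc (k + m) := fun k => Function.surjInv_eq hfrobsurj _
  set Q : Polynomial F := PropAux.qpolyOf q qc (s + 1) with hQdef
  have hQpow : Q ^ q ^ m = PropAux.qpolyOf q vc (m + (s + 1)) := by
    rw [hQdef, PropAux.qpolyOf_pow p hq qc (s + 1) m]
    rw [show s + 1 + m = m + (s + 1) from by omega]
    refine PropAux.qpolyOf_congr fun t ht => ?_
    by_cases hmt : m ≤ t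
    · rw [if_pos hmt]
      have h := hqc (t - m)
      rw [Nat.sub_add_cancel hmt] at h
      exact h
    · rw [if_neg hmt]
      exact (hvc0 t (by omega)).symm
  have hmain : Q ^ q ^ m = X + U.comp gs := by rw [hQpow, hrhs]
  -- nonvanishing
  have hU1 : U.coeff 1 = u 0 := by
    have h := PropAux.coeff_qpolyOf hq2 u m 0
    rw [pow_zero] at h
    rw [hUdef, h, if_pos (by omega)]
  have hu0 : u 0 ≠ 0 := by
    have h0 := hu 0 (by omega)
    rw [PropAux.qconv_lt u (by omega : 0 < m), Finset.sum_range_one] at h0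
    simp only [Nat.sub_self, pow_zero, pow_one, if_pos rfl] at h0
    intro hcontra
    rw [hcontra, zero_mul] at h0
    exact (by norm_num : (0 : F) ≠ -1) h0
  have hUne : U ≠ 0 := by
    intro h
    apply hu0
    rw [← hU1, h, Polynomial.coeff_zero]
  have hUdegle : U.natDegree ≤ q ^ (m - 1) :=
    PropAux.natDegree_qpolyOf_le (by omega) u m hm1
  have h2qs : 2 ≤ q ^ s := le_trans hq2 (Nat.le_self_pow (by omega) q)
  have hQne : Q ≠ 0 := by
    intro h
    rw [h, zero_pow (pow_ne_zero _ hq0)] at hmain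
    have hcz : -X = U.comp gs := neg_eq_of_add_eq_zero_right hmain.symm
    have hdeg : (U.comp gs).natDegree = U.natDegree * q ^ s := by
      rw [Polynomial.natDegree_comp, hgsdeg]
    have hUd1 : 1 ≤ U.natDegree :=
      Polynomial.le_natDegree_of_ne_zero (by rw [hU1]; exact hu0)
    have h1 : (1 : ℕ) = U.natDegree * q ^ s := by
      rw [← hdeg, ← hcz, Polynomial.natDegree_neg, Polynomial.natDegree_X]
    have h2 : q ^ s ≤ U.natDegree * q ^ s := Nat.le_mul_of_pos_left _ (by omega)
    omega
  -- uniqueness of any valid pair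
  have huniq : ∀ Q' U' : Polynomial F, Q' ≠ 0 → U' ≠ 0 → IsqPoly q Q' → IsqPoly q U' →
      U'.natDegree ≤ q ^ (m - 1) → Q' ^ q ^ m = X + U'.comp gs → Q' = Q ∧ U' = U := by
    intro Q' U' hQ'ne hU'ne hQ'q hU'q hU'deg heq
    have hQ'deg : Q'.natDegree ≤ q ^ (s - 1) := by
      have h2 : (X + U'.comp gs).natDegree ≤ q ^ (m + s - 1) := by
        refine (Polynomial.natDegree_add_le _ _).trans ?_
        rw [Polynomial.natDegree_X, Polynomial.natDegree_comp, hgsdeg]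
        have h3 : U'.natDegree * q ^ s ≤ q ^ (m - 1) * q ^ s :=
          Nat.mul_le_mul_right _ hU'deg
        rw [← pow_add, show m - 1 + s = m + s - 1 from by omega] at h3
        exact max_le (Nat.one_le_pow _ _ (by omega)) h3
      have h3 : q ^ m * Q'.natDegree ≤ q ^ (m + s - 1) := by
        rw [← Polynomial.natDegree_pow, heq]; exact h2
      rw [show m + s - 1 = m + (s - 1) from by omega, pow_add] at h3
      exact Nat.le_of_mul_le_mul_left h3 (by positivity)
    have hU'z : ∀ k, m ≤ k → U'.coeff (q ^ k) = 0 := by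
      intro k hk
      refine Polynomial.coeff_eq_zero_of_natDegree_lt ?_
      calc U'.natDegree ≤ q ^ (m - 1) := hU'deg
        _ < q ^ k := Nat.pow_lt_pow_right (by omega) (by omega)
    have hU'rep : U' = PropAux.qpolyOf q (fun k => U'.coeff (q ^ k)) m :=
      PropAux.eq_qpolyOf hq2 hU'q m hU'z
    have hQ'rep : Q' = PropAux.qpolyOf q (fun k => Q'.coeff (q ^ k)) (s + 1) := by
      refine PropAux.eq_qpolyOf hq2 hQ'q (s + 1) fun k hk => ?_
      refine Polynomial.coeff_eq_zero_of_natDegree_lt ?_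
      calc Q'.natDegree ≤ q ^ (s - 1) := hQ'deg
        _ < q ^ k := Nat.pow_lt_pow_right (by omega) (by omega)
    -- coefficient form of the equation
    have hU'comp : U'.comp gs = PropAux.qpolyOf q
        (fun t => PropAux.qconv q b m (fun k => U'.coeff (q ^ k)) t) (m + (s + 1)) := by
      conv_lhs => rw [hU'rep, hgs']
      rw [PropAux.qpolyOf_comp p hq _ b m (s + 1) hbz]
      rfl
    have hQ'pow : Q' ^ q ^ m = PropAux.qpolyOf q
        (fun t => if m ≤ t then Q'.coeff (q ^ (t - m)) ^ q ^ m else 0) (m + (s + 1)) := by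
      conv_lhs => rw [hQ'rep]
      rw [PropAux.qpolyOf_pow p hq _ (s + 1) m, show s + 1 + m = m + (s + 1) from by omega]
    have heqBig : PropAux.qpolyOf q
        (fun t => if m ≤ t then Q'.coeff (q ^ (t - m)) ^ q ^ m else 0) (m + (s + 1))
        = PropAux.qpolyOf q
            (fun t => (if t = 0 then (1 : F) else 0)
              + PropAux.qconv q b m (fun k => U'.coeff (q ^ k)) t) (m + (s + 1)) := by
      rw [← hQ'pow, heq, hU'comp, hX, PropAux.qpolyOf_add]
    have hco : ∀ t, t < m → PropAux.qconv q b m (fun k => U'.coeff (q ^ k)) t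
        = (if t = 0 then (-1 : F) else 0) := by
      intro t ht
      have hc := congrArg (fun P => Polynomial.coeff P (q ^ t)) heqBig
      simp only [PropAux.coeff_qpolyOf hq2] at hc
      rw [if_pos (by omega : t < m + (s + 1)), if_pos (by omega : t < m + (s + 1)),
        if_neg (by omega : ¬ m ≤ t)] at hc
      have hc2 := neg_eq_of_add_eq_zero_right hc.symm
      by_cases h0 : t = 0
      · rw [if_pos h0] at hc2 ⊢
        rw [← hc2]
      · rw [if_neg h0] at hc2 ⊢
        rw [← hc2, neg_zero]
    have hueq : (fun k => U'.coeff (q ^ k)) = u := by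
      refine PropAux.qconv_inj (q := q) hb0' hU'z huz fun t ht => ?_
      rw [hco t ht, hu t ht]
    have hUU : U' = U := by rw [hU'rep, hueq, ← hUdef]
    have hQQ : Q' = Q := by
      have hfrobP : Function.Injective (fun x : Polynomial F => x ^ q ^ m) :=
        PropAux.frob_inj p hq m
      apply hfrobP
      show Q' ^ q ^ m = Q ^ q ^ m
      rw [heq, hmain, hUU]
    exact ⟨hQQ, hUU⟩
  constructor
  · refine ⟨(Q, U), ⟨hQne, hUne, PropAux.isqPoly_qpolyOf qc (s + 1),
      PropAux.isqPoly_qpolyOf u m, hUdegle, hmain⟩, ?_⟩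
    rintro ⟨Q', U'⟩ ⟨h1, h2, h3, h4, h5, h6⟩
    obtain ⟨hQQ, hUU⟩ := huniq Q' U' h1 h2 h3 h4 h5 h6
    exact Prod.ext hQQ hUU
  · intro Q' U' hQ'ne hU'ne hQ'q hU'q hU'deg heq
    obtain ⟨uu, huu⟩ := hU'q _ (Polynomial.natDegree_mem_support_of_nonzero hU'ne)
    have huule : uu ≤ m - 1 := by
      have h1 : q ^ uu ≤ q ^ (m - 1) := huu ▸ hU'deg
      exact (Nat.pow_le_pow_iff_right (by omega)).mp h1
    refine ⟨⟨uu, huule, huu⟩, ?_⟩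
    have hcompdeg : (U'.comp gs).natDegree = q ^ (uu + s) := by
      rw [Polynomial.natDegree_comp, hgsdeg, huu, ← pow_add]
    have hXlt : (X : Polynomial F).natDegree < (U'.comp gs).natDegree := by
      rw [Polynomial.natDegree_X, hcompdeg]
      have h1 : 2 ≤ q ^ (uu + s) := le_trans hq2 (Nat.le_self_pow (by omega) q)
      omega
    have hsum : (X + U'.comp gs).natDegree = q ^ (uu + s) := by
      rw [Polynomial.natDegree_add_eq_right_of_natDegree_lt hXlt, hcompdeg]
    have h1 : q ^ m * Q'.natDegree = q ^ (uu + s) := by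
      rw [← Polynomial.natDegree_pow, heq, hsum]
    have h2 : q ^ (uu + s) ≤ q ^ m * q ^ (s - 1) := by
      rw [← pow_add]
      exact Nat.pow_le_pow_right (by omega) (by omega)
    have h3 : q ^ m * Q'.natDegree ≤ q ^ m * q ^ (s - 1) := by omega
    exact Nat.le_of_mul_le_mul_left h3 (Nat.pow_pos (by omega))
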